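/- Let p be a prime, G a finite group, and G₀ ⊴ G a normal subgroup whose index [G : G₀] is prime to p. Then G₀ has a strongly p-embedded subgroup if and only if G has a strongly p-embedded subgroup. -/

import Mathlib

open Pointwise

/-- A proper subgroup `H < G` is strongly `p`-embedded if `p` divides `|H|` and, for every
`g ∈ G` with `g ∉ H`, `p` does not divide `|H ∩ gHg⁻¹|`. -/
def IsStronglyPEmbedded (p : ℕ) {G : Type*} [Group G] (H : Subgroup G) : Prop :=
  H ≠ ⊤ ∧ (p ∣ Nat.card H) ∧
    ∀ g : G, g ∉ H →
      ¬ (p ∣ Nat.card ↥(H ⊓ Subgroup.map (MulAut.conj g).toMonoidHom H))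


/-- The adjacency relation on Sylow `p`-subgroups: nontrivial intersection. -/
def sylRel (p : ℕ) (G : Type*) [Group G] (P Q : Sylow p G) : Prop :=
  (P : Subgroup G) ⊓ (Q : Subgroup G) ≠ ⊥

lemma eqvGen_mono {α β : Type*} (f : α → β) {r : α → α → Prop} {r' : β → β → Prop}
    (h : ∀ a b, r a b → r' (f a) (f b)) {a b : α} (hab : Relation.EqvGen r a b) :
    Relation.EqvGen r' (f a) (f b) := by
  induction hab with
  | rel x y hxy => exact Relation.EqvGen.rel _ _ (h _ _ hxy)
  | refl x => exact Relation.EqvGen.refl _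
  | symm x y _ ih => exact ih.symm _ _
  | trans x y z _ _ ih₁ ih₂ => exact ih₁.trans _ _ _ ih₂

section basic

variable {p : ℕ} {G : Type*} [Group G]

lemma card_map_subtype (N : Subgroup G) (K : Subgroup ↥N) :
    Nat.card (K.map N.subtype) = Nat.card K :=
  (Nat.card_congr (Subgroup.equivMapOfInjective K N.subtype N.subtype_injective).toEquiv).symm

lemma sylRel_symm {P Q : Sylow p G} (h : sylRel p G P Q) : sylRel p G Q P := by
  unfold sylRel at *; rwa [inf_comm]

lemma smul_ne_bot {g : MulAut G} {K : Subgroup G} (h : K ≠ ⊥) : g • K ≠ ⊥ := by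
  obtain ⟨⟨x, hx⟩, hx1⟩ := Subgroup.ne_bot_iff_exists_ne_one.1 h
  refine Subgroup.ne_bot_iff_exists_ne_one.2 ⟨⟨g x, Subgroup.smul_mem_pointwise_smul _ _ _ hx⟩, ?_⟩
  simp only [ne_eq, Subgroup.mk_eq_one]
  intro hgx
  exact hx1 (Subtype.ext (by simpa using congrArg g.symm hgx))

lemma sylRel_smul (g : G) {P Q : Sylow p G} (h : sylRel p G P Q) :
    sylRel p G (g • P) (g • Q) := by
  unfold sylRel at *
  rw [Sylow.coe_subgroup_smul, Sylow.coe_subgroup_smul, ← Subgroup.smul_inf]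
  exact smul_ne_bot h

lemma rel_smul_iff (g : G) {P Q : Sylow p G} :
    Relation.EqvGen (sylRel p G) (g • P) (g • Q) ↔ Relation.EqvGen (sylRel p G) P Q := by
  constructor
  · intro h
    have := eqvGen_mono (fun S : Sylow p G => g⁻¹ • S) (fun a b hab => sylRel_smul g⁻¹ hab) h
    simpa using this
  · exact fun h => eqvGen_mono (fun S : Sylow p G => g • S) (fun a b hab => sylRel_smul g hab) h

lemma p_dvd_card_sylow [Finite G] [Fact p.Prime] (hpG : p ∣ Nat.card G) (P : Sylow p G) :
    p ∣ Nat.card (P : Subgroup G) := by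
  rw [Sylow.card_eq_multiplicity]
  exact dvd_pow_self p (Nat.Prime.factorization_pos_of_dvd (Fact.out) (Nat.card_pos.ne')
    hpG).ne'

end basic


section misc
variable {p : ℕ} {G : Type*} [Group G]

lemma map_subtype_conj_smul (N : Subgroup G) (x : ↥N) (K : Subgroup ↥N) :
    (Subgroup.map (MulAut.conj x).toMonoidHom K).map N.subtype
      = Subgroup.map (MulAut.conj (x : G)).toMonoidHom (K.map N.subtype) := by
  rw [Subgroup.map_map, Subgroup.map_map]
  congr 1

lemma pgroup_le [Finite G] (hp : p.Prime) (G₀ : Subgroup G) (hn : G₀.Normal)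
    (hind : ¬ p ∣ G₀.index) (Q : Subgroup G) (hQ : IsPGroup p Q) : Q ≤ G₀ := by
  haveI := hn
  have : Fact p.Prime := ⟨hp⟩
  have h1 : G₀.relIndex Q ∣ G₀.index := Subgroup.relIndex_dvd_index_of_normal G₀ Q
  have h2 : G₀.relIndex Q ∣ Nat.card Q := Subgroup.index_dvd_card (G₀.subgroupOf Q)
  obtain ⟨n, hn'⟩ := IsPGroup.iff_card.1 hQ
  rw [hn'] at h2
  obtain ⟨k, _, hk⟩ := (Nat.dvd_prime_pow hp).1 h2
  rcases Nat.eq_zero_or_pos k with hk0 | hk0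
  · rw [hk0, pow_zero] at hk
    exact Subgroup.relIndex_eq_one.1 hk
  · exact absurd (dvd_trans (hk ▸ dvd_pow_self p hk0.ne') h1) hind

end misc

theorem construct (p : ℕ) (hp : p.Prime) (G : Type*) [Group G] [Finite G]
    (hpG : p ∣ Nat.card G)
    (hdisc : ∃ P Q : Sylow p G, ¬ Relation.EqvGen (sylRel p G) P Q) :
    ∃ H : Subgroup G, IsStronglyPEmbedded p H := by
  have : Fact p.Prime := ⟨hp⟩
  obtain ⟨P₀, Q₀, hnrel⟩ := hdisc
  set r := sylRel p G with hr
  -- the stabilizer of the connected component of `P₀`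
  set H : Subgroup G :=
    { carrier := {g | Relation.EqvGen r (g • P₀) P₀}
      one_mem' := by simpa using Relation.EqvGen.refl P₀
      mul_mem' := by
        intro a b ha hb
        have h1 : Relation.EqvGen r (a • (b • P₀)) (a • P₀) := (rel_smul_iff a).2 hb
        simpa [mul_smul] using h1.trans _ _ _ ha
      inv_mem' := by
        intro a ha
        have h1 : Relation.EqvGen r (a • (a⁻¹ • P₀)) (a • P₀) := by
          simpa [smul_inv_smul] using (Relation.EqvGen.symm _ _ ha)
        exact (rel_smul_iff a).1 h1 } with hH
  have memH : ∀ g : G, g ∈ H ↔ Relation.EqvGen r (g • P₀) P₀ := fun g => Iff.rfl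
  have hP₀H : (P₀ : Subgroup G) ≤ H := by
    intro x hx
    rw [memH, Sylow.smul_eq_iff_mem_normalizer.2 (Subgroup.le_normalizer hx)]
    exact Relation.EqvGen.refl P₀
  -- key claim
  have claim : ∀ Q : Subgroup G, Q ≤ H → Q ≠ ⊥ → IsPGroup p Q →
      ∃ S : Sylow p G, Q ≤ (S : Subgroup G) ∧ Relation.EqvGen r (S : Sylow p G) P₀ := by
    intro Q hQH hQbot hQp
    have hQ' : IsPGroup p (Q.subgroupOf H) := hQp.comap_subtype
    obtain ⟨R', hR'⟩ := hQ'.exists_le_sylow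
    obtain ⟨x, hx⟩ := MulAction.exists_smul_eq (↥H) (P₀.subtype hP₀H) R'
    refine ⟨(↑x : G) • P₀, ?_, ?_⟩
    · rw [Sylow.smul_subtype hP₀H x] at hx
      have h2 : (R' : Subgroup ↥H) = (((↑x : G) • P₀ : Sylow p G) : Subgroup G).subgroupOf H := by
        rw [← hx, Sylow.coe_subtype]
        rfl
      have h3 := Subgroup.map_subtype_le (K := Q.subgroupOf H)
      have h4 : (Q.subgroupOf H).map H.subtype ≤ (R' : Subgroup ↥H).map H.subtype :=
        Subgroup.map_mono hR'
      rw [Subgroup.subgroupOf_map_subtype, h2, Subgroup.subgroupOf_map_subtype] at h4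
      calc Q = Q ⊓ H := (inf_eq_left.2 hQH).symm
        _ ≤ _ := le_trans h4 inf_le_left
    · exact (memH _).1 x.2
  refine ⟨H, ?_, ?_, ?_⟩
  · obtain ⟨g, hg⟩ := MulAction.exists_smul_eq G P₀ Q₀
    intro htop
    have : g ∈ H := htop ▸ Subgroup.mem_top g
    rw [memH, hg] at this
    exact hnrel (Relation.EqvGen.symm _ _ this)
  · exact dvd_trans (p_dvd_card_sylow hpG P₀) (Subgroup.card_dvd_of_le hP₀H)
  · intro g hg hdvd
    apply hg
    have hmapeq : Subgroup.map (MulAut.conj g).toMonoidHom H = MulAut.conj g • H := rfl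
    -- find an element of order p in the intersection
    have : Fintype ↥(H ⊓ Subgroup.map (MulAut.conj g).toMonoidHom H) := Fintype.ofFinite _
    rw [Nat.card_eq_fintype_card] at hdvd
    obtain ⟨y, hy⟩ := exists_prime_orderOf_dvd_card p hdvd
    have hyord : orderOf (y : G) = p :=
      (orderOf_injective _ (Subgroup.subtype_injective _) y).trans hy
    have hy1 : (y : G) ≠ 1 := by
      intro h; rw [h, orderOf_one] at hyord; exact hp.one_lt.ne' hyord.symm
    set x : G := (y : G) with hxdef
    have hxH : x ∈ H := (Subgroup.mem_inf.1 y.2).1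
    have hxgH : x ∈ MulAut.conj g • H := (Subgroup.mem_inf.1 y.2).2
    -- Q = zpowers x
    have hcardQ : Nat.card (Subgroup.zpowers x) = p ^ 1 := by
      rw [Nat.card_zpowers, hyord, pow_one]
    have hQp : IsPGroup p (Subgroup.zpowers x) := IsPGroup.of_card hcardQ
    have hQbot : Subgroup.zpowers x ≠ ⊥ := by
      intro h
      exact hy1 (Subgroup.mem_bot.1 (h ▸ Subgroup.mem_zpowers x))
    obtain ⟨S, hQS, hSrel⟩ := claim _ (Subgroup.zpowers_le.2 hxH) hQbot hQp
    -- x₂ = g⁻¹ x g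
    set x₂ : G := g⁻¹ * x * g with hx₂def
    have hx₂H : x₂ ∈ H := by
      rw [Subgroup.mem_pointwise_smul_iff_inv_smul_mem] at hxgH
      simpa [MulAut.smul_def, hx₂def] using hxgH
    have hx₂ord : orderOf x₂ = p := by
      have : x₂ = (MulAut.conj g⁻¹) x := by simp [hx₂def, MulAut.conj_apply, mul_assoc]
      rw [this, MulEquiv.orderOf_eq, hyord]
    have hcardQ₂ : Nat.card (Subgroup.zpowers x₂) = p ^ 1 := by
      rw [Nat.card_zpowers, hx₂ord, pow_one]
    have hQ₂p : IsPGroup p (Subgroup.zpowers x₂) := IsPGroup.of_card hcardQ₂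
    have hx₂1 : x₂ ≠ 1 := by
      intro h; rw [h, orderOf_one] at hx₂ord; exact hp.one_lt.ne' hx₂ord.symm
    have hQ₂bot : Subgroup.zpowers x₂ ≠ ⊥ := by
      intro h
      exact hx₂1 (Subgroup.mem_bot.1 (h ▸ Subgroup.mem_zpowers x₂))
    obtain ⟨S₂, hQ₂S₂, hS₂rel⟩ := claim _ (Subgroup.zpowers_le.2 hx₂H) hQ₂bot hQ₂p
    -- Q ≤ g • S₂
    have hsmulQ₂ : MulAut.conj g • Subgroup.zpowers x₂ = Subgroup.zpowers x := by
      show Subgroup.map (MulAut.conj g).toMonoidHom (Subgroup.zpowers x₂) = _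
      rw [MonoidHom.map_zpowers]
      congr 1
      show (MulAut.conj g) x₂ = x
      simp [hx₂def, MulAut.conj_apply, mul_assoc]
    have hQgS₂ : Subgroup.zpowers x ≤ ((g • S₂ : Sylow p G) : Subgroup G) := by
      rw [Sylow.coe_subgroup_smul, ← hsmulQ₂]
      show Subgroup.map (MulAut.conj g).toMonoidHom _ ≤ Subgroup.map (MulAut.conj g).toMonoidHom _
      exact Subgroup.map_mono hQ₂S₂
    -- S and g • S₂ intersect nontrivially
    have hSrel2 : r S (g • S₂) := by
      rw [hr]
      unfold sylRel
      intro h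
      apply hQbot
      rw [← le_bot_iff, ← h]
      exact le_inf hQS hQgS₂
    -- conclude
    rw [memH]
    have c1 : Relation.EqvGen r (g • P₀) (g • S₂) :=
      Relation.EqvGen.symm _ _ ((rel_smul_iff g).2 hS₂rel)
    have c2 : Relation.EqvGen r (g • S₂ : Sylow p G) S := Relation.EqvGen.symm _ _ (Relation.EqvGen.rel _ _ hSrel2)
    exact (c1.trans _ _ _ c2).trans _ _ _ hSrel

theorem deconstruct (p : ℕ) (hp : p.Prime) (K : Type*) [Group K] [Finite K]
    (H : Subgroup K) (hH : IsStronglyPEmbedded p H) :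
    ∃ P Q : Sylow p K, ¬ Relation.EqvGen (sylRel p K) P Q := by
  have : Fact p.Prime := ⟨hp⟩
  obtain ⟨hHtop, hHcard, hHstrong⟩ := hH
  have hpK : p ∣ Nat.card K := hHcard.trans (Subgroup.card_subgroup_dvd_card H)
  -- for any n ∉ H, p does not divide card (H ⊓ conj n • H)
  have hstrong' : ∀ n : K, p ∣ Nat.card ↥(H ⊓ MulAut.conj n • H) → n ∈ H := by
    intro n hdvd
    by_contra hn
    exact hHstrong n hn hdvd
  -- Step 1: a Sylow p-subgroup of K contained in H
  obtain ⟨P₁⟩ : Nonempty (Sylow p ↥H) := inferInstance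
  set PH : Subgroup K := (P₁ : Subgroup ↥H).map H.subtype with hPHdef
  have hPHle : PH ≤ H := Subgroup.map_subtype_le _
  have hPHp : IsPGroup p PH := P₁.2.map _
  obtain ⟨P, hPle⟩ := hPHp.exists_le_sylow
  have hcardP₁ : p ∣ Nat.card (P₁ : Subgroup ↥H) := p_dvd_card_sylow hHcard P₁
  have hcardPH : p ∣ Nat.card PH := by rwa [hPHdef, card_map_subtype]
  -- maximality: P ⊓ H = PH
  have hinf : (P : Subgroup K) ⊓ H = PH := by
    have h1 : IsPGroup p (((P : Subgroup K) ⊓ H).subgroupOf H) := (P.2.to_inf_left (K := H)).comap_subtype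
    have h2 : (P₁ : Subgroup ↥H) ≤ ((P : Subgroup K) ⊓ H).subgroupOf H := by
      rw [← Subgroup.comap_map_eq_self_of_injective (Subgroup.subtype_injective H) (P₁ : Subgroup ↥H)]
      exact Subgroup.comap_mono (le_inf hPle hPHle)
    have h3 := P₁.is_maximal' h1 h2
    have h4 := congrArg (Subgroup.map H.subtype) h3
    rwa [Subgroup.subgroupOf_map_subtype, inf_of_le_left (inf_le_right (a := (P : Subgroup K)))] at h4
  have hPH' : (P : Subgroup K) ≤ H := by
    by_contra hne
    have hlt : PH < (P : Subgroup K) := lt_of_le_of_ne hPle (fun h => hne (h ▸ hPHle))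
    -- normalizer growth inside the p-group P
    have hnilp : Group.IsNilpotent ↥(P : Subgroup K) := P.2.isNilpotent
    have hnc : NormalizerCondition ↥(P : Subgroup K) := normalizerCondition_of_isNilpotent
    have hPHPne : PH.subgroupOf (P : Subgroup K) < ⊤ := by
      rcases lt_or_eq_of_le (le_top : PH.subgroupOf (P : Subgroup K) ≤ ⊤) with h | h
      · exact h
      · exfalso
        have := congrArg (Subgroup.map (P : Subgroup K).subtype) h
        rw [Subgroup.subgroupOf_map_subtype, inf_of_le_left hPle, ← MonoidHom.range_eq_map,
          Subgroup.subtype_range] at this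
        exact hlt.ne this
    obtain ⟨x, hxnorm, hxo⟩ := SetLike.exists_of_lt (hnc _ hPHPne)
    have hxPH : (x : K) ∉ PH := fun h => hxo (Subgroup.mem_subgroupOf.2 h)
    have hxH : (x : K) ∉ H := fun h => hxPH (hinf ▸ Subgroup.mem_inf.2 ⟨x.2, h⟩)
    apply hxH
    apply hstrong' (x : K)
    have hPHsub : PH ≤ H ⊓ MulAut.conj (x : K) • H := by
      refine le_inf hPHle ?_
      intro a ha
      rw [Subgroup.mem_pointwise_smul_iff_inv_smul_mem]
      have haP : a ∈ (P : Subgroup K) := hPle ha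
      set a' : ↥(P : Subgroup K) := ⟨a, haP⟩ with ha'
      have hb : x⁻¹ * a' * x ∈ PH.subgroupOf (P : Subgroup K) := by
        rw [Subgroup.mem_normalizer_iff] at hxnorm
        refine (hxnorm _).2 ?_
        have heq2 : x * (x⁻¹ * a' * x) * x⁻¹ = a' := by group
        rw [heq2]
        refine Subgroup.mem_subgroupOf.2 ?_
        simpa [ha'] using ha
      have : ((x⁻¹ * a' * x : ↥(P : Subgroup K)) : K) ∈ PH := Subgroup.mem_subgroupOf.1 hb
      have heq : ((x⁻¹ * a' * x : ↥(P : Subgroup K)) : K) = (x : K)⁻¹ * a * (x : K) := by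
        simp [ha']
      rw [heq] at this
      have : (x : K)⁻¹ * a * (x : K) ∈ H := hPHle this
      simpa [MulAut.smul_def] using this
    exact hcardPH.trans (Subgroup.card_dvd_of_le hPHsub)
  -- Step 2: the normalizer of P lies in H
  have hnorm : ∀ n : K, n ∈ Subgroup.normalizer ((P : Subgroup K) : Set K) → n ∈ H := by
    intro n hn
    apply hstrong' n
    have hsmul : (P : Subgroup K) = MulAut.conj n • (P : Subgroup K) := by
      have := Sylow.smul_eq_iff_mem_normalizer.2 hn
      have h2 := congrArg (fun S : Sylow p K => (S : Subgroup K)) this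
      simpa [Sylow.coe_subgroup_smul] using h2.symm
    have hPsub : (P : Subgroup K) ≤ H ⊓ MulAut.conj n • H := by
      refine le_inf hPH' ?_
      rw [hsmul]
      show Subgroup.map (MulAut.conj n).toMonoidHom _ ≤ Subgroup.map (MulAut.conj n).toMonoidHom _
      exact Subgroup.map_mono hPH'
    exact (p_dvd_card_sylow hpK P).trans (Subgroup.card_dvd_of_le hPsub)
  -- Step 3: pick g ∉ H
  have hgex : ∃ g : K, g ∉ H := by
    by_contra h
    push_neg at h
    exact hHtop ((Subgroup.eq_top_iff' H).2 h)
  obtain ⟨g, hg⟩ := hgex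
  -- Step 4: the connected component of P consists of H-conjugates
  set φ : Sylow p K → Prop := fun S => ∃ h ∈ H, h • P = S with hφ
  have key : ∀ S T : Sylow p K, sylRel p K S T → φ S → φ T := by
    rintro S T hST ⟨h, hh, hhP⟩
    obtain ⟨k, hk⟩ := MulAction.exists_smul_eq K P T
    have hrel2 : sylRel p K P ((h⁻¹ * k) • P) := by
      have := sylRel_smul h⁻¹ hST
      rwa [← hhP, inv_smul_smul, ← hk, ← mul_smul] at this
    set m := h⁻¹ * k with hm
    have hXp : IsPGroup p ((P : Subgroup K) ⊓ ((m • P : Sylow p K) : Subgroup K) : Subgroup K) :=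
      P.2.to_inf_left
    have hXbot : (P : Subgroup K) ⊓ ((m • P : Sylow p K) : Subgroup K) ≠ ⊥ := hrel2
    have hXcard : p ∣ Nat.card ((P : Subgroup K) ⊓ ((m • P : Sylow p K) : Subgroup K) : Subgroup K) := by
      rcases hXp.card_eq_or_dvd with h1 | h1
      · exact absurd (Subgroup.card_eq_one.1 h1) hXbot
      · exact h1
    have hXsub : (P : Subgroup K) ⊓ ((m • P : Sylow p K) : Subgroup K) ≤ H ⊓ MulAut.conj m • H := by
      refine inf_le_inf hPH' ?_
      rw [Sylow.coe_subgroup_smul]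
      show Subgroup.map (MulAut.conj m).toMonoidHom _ ≤ Subgroup.map (MulAut.conj m).toMonoidHom _
      exact Subgroup.map_mono hPH'
    have hmH : m ∈ H := hstrong' m (hXcard.trans (Subgroup.card_dvd_of_le hXsub))
    refine ⟨k, ?_, hk⟩
    have : k = h * m := by rw [hm]; group
    rw [this]
    exact mul_mem hh hmH
  have claim : ∀ S T : Sylow p K, Relation.EqvGen (sylRel p K) S T → (φ S ↔ φ T) := by
    intro S T hrel
    induction hrel with
    | rel x y hxy => exact ⟨key _ _ hxy, key _ _ (sylRel_symm hxy)⟩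
    | refl x => exact Iff.rfl
    | symm x y _ ih => exact ih.symm
    | trans x y z _ _ ih₁ ih₂ => exact ih₁.trans ih₂
  refine ⟨P, g • P, fun hrel => ?_⟩
  obtain ⟨h, hh, hhP⟩ := (claim _ _ hrel).1 ⟨1, one_mem H, one_smul K P⟩
  have hfix : (h⁻¹ * g) • P = P := by
    rw [mul_smul, ← hhP, inv_smul_smul]
  have : h⁻¹ * g ∈ H := hnorm _ (Sylow.smul_eq_iff_mem_normalizer.1 hfix)
  have : g ∈ H := by
    have h2 := mul_mem hh this
    rwa [← mul_assoc, mul_inv_cancel, one_mul] at h2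
  exact hg this


/-- **Statement 9.** Let `p` be a prime, `G` a finite group, and `G₀ ⊴ G` a normal subgroup
of index prime to `p`.  Then `G₀` has a strongly `p`-embedded subgroup if and only if `G`
has a strongly `p`-embedded subgroup. -/
theorem stmt_9 (p : ℕ) (hp : p.Prime) (G : Type*) [Group G] [Finite G]
    (G₀ : Subgroup G) (hn : G₀.Normal) (hind : ¬ p ∣ G₀.index) :
    (∃ H : Subgroup ↥G₀, IsStronglyPEmbedded p H) ↔
      ∃ H : Subgroup G, IsStronglyPEmbedded p H := by
  have : Fact p.Prime := ⟨hp⟩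
  constructor
  · -- forward direction via the Sylow intersection graph
    rintro ⟨H₀, hH₀⟩
    have hpG₀ : p ∣ Nat.card ↥G₀ := hH₀.2.1.trans (Subgroup.card_subgroup_dvd_card H₀)
    have hpG : p ∣ Nat.card G := hpG₀.trans (Subgroup.card_subgroup_dvd_card G₀)
    obtain ⟨P', Q', hnrel'⟩ := deconstruct p hp ↥G₀ H₀ hH₀
    -- lift Sylow subgroups of G₀ to G
    have hSle : ∀ S : Sylow p G, (S : Subgroup G) ≤ G₀ := fun S =>
      pgroup_le hp G₀ hn hind _ S.2
    have lift : ∀ R : Sylow p ↥G₀, ∃ P : Sylow p G,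
        (P : Subgroup G) = ((R : Subgroup ↥G₀).map G₀.subtype) := by
      intro R
      have hRM : IsPGroup p ((R : Subgroup ↥G₀).map G₀.subtype) := R.2.map _
      obtain ⟨P, hle⟩ := hRM.exists_le_sylow
      refine ⟨P, ?_⟩
      have h1 : IsPGroup p ((P : Subgroup G).subgroupOf G₀) := P.2.comap_subtype
      have h2 : (R : Subgroup ↥G₀) ≤ (P : Subgroup G).subgroupOf G₀ := by
        rw [← Subgroup.comap_map_eq_self_of_injective (Subgroup.subtype_injective G₀)
          (R : Subgroup ↥G₀)]
        exact Subgroup.comap_mono hle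
      have h3 := R.is_maximal' h1 h2
      have h4 := congrArg (Subgroup.map G₀.subtype) h3
      rwa [Subgroup.subgroupOf_map_subtype, inf_of_le_left (hSle P)] at h4
    obtain ⟨P, hPeq⟩ := lift P'
    obtain ⟨Q, hQeq⟩ := lift Q'
    set F : Sylow p G → Sylow p ↥G₀ := fun S => S.subtype (hSle S) with hF
    have hFP : F P = P' := by
      apply Sylow.ext
      rw [hF]
      show ((P : Subgroup G)).subgroupOf G₀ = _
      rw [hPeq]
      exact Subgroup.comap_map_eq_self_of_injective (Subgroup.subtype_injective G₀) _
    have hFQ : F Q = Q' := by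
      apply Sylow.ext
      rw [hF]
      show ((Q : Subgroup G)).subgroupOf G₀ = _
      rw [hQeq]
      exact Subgroup.comap_map_eq_self_of_injective (Subgroup.subtype_injective G₀) _
    have hrelF : ∀ S T : Sylow p G, sylRel p G S T → sylRel p ↥G₀ (F S) (F T) := by
      intro S T hST
      show Subgroup.comap G₀.subtype (S : Subgroup G) ⊓ Subgroup.comap G₀.subtype (T : Subgroup G) ≠ ⊥
      rw [← Subgroup.comap_inf]
      show ((S : Subgroup G) ⊓ (T : Subgroup G)).subgroupOf G₀ ≠ ⊥
      intro h
      apply hST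
      have h2 := congrArg (Subgroup.map G₀.subtype) h
      rw [Subgroup.subgroupOf_map_subtype] at h2
      rw [inf_of_le_left (le_trans inf_le_left (hSle S))] at h2
      simpa using h2
    apply construct p hp G hpG
    refine ⟨P, Q, fun hrel => hnrel' ?_⟩
    have := eqvGen_mono F (fun a b hab => hrelF a b hab) hrel
    rwa [hFP, hFQ] at this
  · -- backward direction: intersect with G₀
    rintro ⟨H, hHtop, hHcard, hHstrong⟩
    refine ⟨H.subgroupOf G₀, ?_, ?_, ?_⟩
    · -- proper
      intro htop
      have hmap := congrArg (Subgroup.map G₀.subtype) htop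
      rw [Subgroup.subgroupOf_map_subtype, ← MonoidHom.range_eq_map,
        Subgroup.subtype_range] at hmap
      have hG₀H : G₀ ≤ H := by rw [← hmap]; exact inf_le_left
      have hgex : ∃ g : G, g ∉ H := by
        by_contra h
        push_neg at h
        exact hHtop ((Subgroup.eq_top_iff' H).2 h)
      obtain ⟨g, hg⟩ := hgex
      apply hHstrong g hg
      -- p divides |G₀| since p divides |H ∩ G₀| (see below), but we derive it directly:
      have hpH : p ∣ Nat.card ↥(H ⊓ G₀) := by
        have h1 : Nat.card ↥(G₀.subgroupOf H) * (G₀.subgroupOf H).index = Nat.card ↥H :=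
          Subgroup.card_mul_index _
        have h2 : ¬ p ∣ (G₀.subgroupOf H).index := fun hd =>
          hind (hd.trans (Subgroup.relIndex_dvd_index_of_normal G₀ H))
        have h3 : p ∣ Nat.card ↥(G₀.subgroupOf H) := by
          rcases (Nat.Prime.dvd_mul hp).1 (h1 ▸ hHcard) with h | h
          · exact h
          · exact absurd h h2
        rwa [← card_map_subtype H (G₀.subgroupOf H), Subgroup.subgroupOf_map_subtype,
          inf_comm] at h3
      have hpG₀ : p ∣ Nat.card ↥G₀ :=
        hpH.trans (Subgroup.card_dvd_of_le inf_le_right)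
      refine hpG₀.trans (Subgroup.card_dvd_of_le (le_inf hG₀H ?_))
      intro a ha
      have : a ∈ MulAut.conj g • H := by
        rw [Subgroup.mem_pointwise_smul_iff_inv_smul_mem]
        have : g⁻¹ * a * g ∈ G₀ := by
          have := hn.conj_mem a ha g⁻¹
          simpa [mul_assoc] using this
        simpa [MulAut.smul_def] using hG₀H this
      exact this
    · -- p divides the cardinality
      have h1 : Nat.card ↥(G₀.subgroupOf H) * (G₀.subgroupOf H).index = Nat.card ↥H :=
        Subgroup.card_mul_index _
      have h2 : ¬ p ∣ (G₀.subgroupOf H).index := fun hd =>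
        hind (hd.trans (Subgroup.relIndex_dvd_index_of_normal G₀ H))
      have h3 : p ∣ Nat.card ↥(G₀.subgroupOf H) := by
        rcases (Nat.Prime.dvd_mul hp).1 (h1 ▸ hHcard) with h | h
        · exact h
        · exact absurd h h2
      rw [← card_map_subtype H (G₀.subgroupOf H), Subgroup.subgroupOf_map_subtype] at h3
      rwa [← card_map_subtype G₀ (H.subgroupOf G₀), Subgroup.subgroupOf_map_subtype, inf_comm]
    · -- strongly embedded condition
      intro x hx hdvd
      have hxH : (x : G) ∉ H := fun h => hx (Subgroup.mem_subgroupOf.2 h)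
      apply hHstrong (x : G) hxH
      have hmapped : (H.subgroupOf G₀ ⊓ Subgroup.map (MulAut.conj x).toMonoidHom
          (H.subgroupOf G₀)).map G₀.subtype
          ≤ H ⊓ Subgroup.map (MulAut.conj (x : G)).toMonoidHom H := by
        rw [Subgroup.map_inf _ _ _ (Subgroup.subtype_injective G₀),
          map_subtype_conj_smul, Subgroup.subgroupOf_map_subtype]
        exact inf_le_inf inf_le_left (Subgroup.map_mono inf_le_left)
      rw [← card_map_subtype G₀ (H.subgroupOf G₀ ⊓ Subgroup.map
        (MulAut.conj x).toMonoidHom (H.subgroupOf G₀))] at hdvd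
      exact hdvd.trans (Subgroup.card_dvd_of_le hmapped)
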